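/- Let S : ℤ → Set (ℂˣ × ℂˣ) be a family of subsets such that for every integer q with |q| ≥ 2: (i) every point (m, ℓ) ∈ S q satisfies m · ℓ^q = 1, and (ii) there exists a point (m, ℓ) ∈ S q with m ≠ 1. Then the collection { S q | q ∈ ℤ, |q| ≥ 2 } contains infinitely many distinct sets (i.e., the image of q ↦ S q over { q | |q| ≥ 2 } is infinite). -/

import Mathlib

/-- If for every `q` with `|q| ≥ 2`, every point `(m, ℓ)` of `S q` satisfies the
filling relation `m * ℓ^q = 1` and some point of `S q` has `m ≠ 1`, then the
collection of the sets `S q`, `|q| ≥ 2`, is infinite. -/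
theorem stmt_3 (S : ℤ → Set (ℂˣ × ℂˣ))
    (hrel : ∀ q : ℤ, 2 ≤ |q| → ∀ p ∈ S q, p.1 * p.2 ^ q = 1)
    (hnt : ∀ q : ℤ, 2 ≤ |q| → ∃ p ∈ S q, p.1 ≠ 1) :
    (S '' {q : ℤ | 2 ≤ |q|}).Infinite := by
  classical
  intro hfin
  -- a total choice of a nontrivial point of `S q`
  have hP : ∀ q : ℤ, ∃ pt : ℂˣ × ℂˣ, 2 ≤ |q| → pt ∈ S q ∧ pt.1 ≠ 1 := by
    intro q
    by_cases hq : 2 ≤ |q|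
    · obtain ⟨pt, h1, h2⟩ := hnt q hq
      exact ⟨pt, fun _ => ⟨h1, h2⟩⟩
    · exact ⟨(1, 1), fun h => absurd h hq⟩
  choose P hP using hP
  -- a total choice of a preimage of each set in the image
  have hσ : ∀ T : Set (ℂˣ × ℂˣ), ∃ q : ℤ,
      T ∈ S '' {q : ℤ | 2 ≤ |q|} → 2 ≤ |q| ∧ S q = T := by
    intro T
    by_cases hT : T ∈ S '' {q : ℤ | 2 ≤ |q|}
    · obtain ⟨q, hq, hSq⟩ := hT
      exact ⟨q, fun _ => ⟨hq, hSq⟩⟩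
    · exact ⟨0, fun h => absurd h hT⟩
  choose σ hσ using hσ
  set F := hfin.toFinset with hF
  set N : ℕ := ∏ T ∈ F, (if orderOf (P (σ T)).2 = 0 then 1 else orderOf (P (σ T)).2)
    with hNdef
  have hN1 : 1 ≤ N := by
    refine Nat.one_le_iff_ne_zero.mpr ?_
    rw [hNdef]
    refine Finset.prod_ne_zero_iff.mpr ?_
    intro T hT
    split <;> omega
  set M : ℕ := 2 + ∑ T ∈ F, (σ T).natAbs with hMdef
  have hM2 : 2 ≤ M := by omega
  set q : ℤ := (N : ℤ) * (M : ℤ) with hqdef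
  have hqM : (M : ℤ) ≤ q := by
    rw [hqdef]
    nlinarith [Int.ofNat_le.mpr hN1, Int.ofNat_le.mpr hM2]
  have hq2 : 2 ≤ |q| := by
    rw [abs_of_nonneg (by positivity)]
    have : (2 : ℤ) ≤ (M : ℤ) := by exact_mod_cast hM2
    linarith
  have hmem : S q ∈ S '' {q : ℤ | 2 ≤ |q|} := ⟨q, hq2, rfl⟩
  have hTF : S q ∈ F := hfin.mem_toFinset.mpr hmem
  obtain ⟨hq'2, hSq'⟩ := hσ (S q) hmem
  set q' : ℤ := σ (S q) with hq'def
  obtain ⟨hptmem, hpt1⟩ := hP q' hq'2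
  set pt := P q' with hptdef
  -- the two filling relations
  have rel1 : pt.1 * pt.2 ^ q' = 1 := hrel q' hq'2 pt hptmem
  have rel2 : pt.1 * pt.2 ^ q = 1 := by
    refine hrel q hq2 pt ?_
    rw [← hSq']
    exact hptmem
  have hpow : pt.2 ^ q = pt.2 ^ q' := mul_left_cancel (rel2.trans rel1.symm)
  have hsub : pt.2 ^ (q - q') = 1 := by
    rw [zpow_sub, hpow, mul_inv_cancel]
  have hdvd : (orderOf pt.2 : ℤ) ∣ q - q' := orderOf_dvd_iff_zpow_eq_one.mpr hsub
  -- bound on |q'|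
  have hq'le : q'.natAbs + 2 ≤ M := by
    have h := Finset.single_le_sum (f := fun T => (σ T).natAbs)
      (fun T _ => Nat.zero_le _) hTF
    omega
  by_cases hord : orderOf pt.2 = 0
  · -- infinite order: q = q', impossible by size
    rw [hord] at hdvd
    have h0 : q - q' = 0 := by
      exact zero_dvd_iff.mp (by exact_mod_cast hdvd)
    have h2 : (q'.natAbs : ℤ) + 2 ≤ (M : ℤ) := by exact_mod_cast hq'le
    have h3 : q' ≤ (q'.natAbs : ℤ) := Int.le_natAbs
    linarith [hqM]
  · -- finite order n: n ∣ N ∣ q, hence n ∣ q', so pt.1 = 1, contradiction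
    have hfac : orderOf pt.2 ∣ N := by
      have h := Finset.dvd_prod_of_mem
        (fun T => (if orderOf (P (σ T)).2 = 0 then 1 else orderOf (P (σ T)).2)) hTF
      have h2 : (if orderOf pt.2 = 0 then 1 else orderOf pt.2) ∣ N := by
        exact h
      rwa [if_neg hord] at h2
    have hdvdq : (orderOf pt.2 : ℤ) ∣ q := by
      rw [hqdef]
      exact Dvd.dvd.mul_right (Int.natCast_dvd_natCast.mpr hfac) _
    have hdvdq' : (orderOf pt.2 : ℤ) ∣ q' := by
      have := dvd_sub hdvdq hdvd
      simpa using this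
    have : pt.2 ^ q' = 1 := orderOf_dvd_iff_zpow_eq_one.mp hdvdq'
    rw [this, mul_one] at rel1
    exact hpt1 rel1
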